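/- Let m ∈ ℕ, b ≥ 1, r ∈ ℕ^b, and k ∈ ℕ, and let S = {s ∈ ℕ^b : Σ_i s_i = k and s_i ≤ r_i + s_{i+1} for all 1 ≤ i ≤ b, where s_{b+1} := 0}. Viewing polynomials in x_0, x_1, …, x_m over ℤ as polynomials in x_0 with coefficients in ℤ[x_1,…,x_m], the coefficient of x_0^k in ∏_{i=1}^b h_i(x_0,x_1,…,x_m)^{r_i} equals Σ_{s ∈ S} (∏_{i=1}^b binom(r_i + s_{i+1}, s_i)) · ∏_{i=1}^b h_i(x_1,…,x_m)^{r_i − s_i + s_{i+1}}. -/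

import Mathlib

/-- Left shift of a vector in `ℕ^b`: `(Ls)_i = s_{i+1}`, with a trailing zero. -/
def shiftL {b : ℕ} (s : Fin b → ℕ) : Fin b → ℕ :=
  fun i => if h : i.val + 1 < b then s ⟨i.val + 1, h⟩ else 0

/-- The set `S` of `s ∈ ℕ^b` with `∑ s = k` and `s_i ≤ r_i + s_{i+1}` (where `s_{b+1} = 0`). -/
def compBddL {b : ℕ} (r : Fin b → ℕ) (k : ℕ) : Finset (Fin b → ℕ) :=
  (Finset.Nat.antidiagonalTuple b k).filter fun s => ∀ i, s i ≤ r i + shiftL s i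

namespace Stmt11Aux
open MvPolynomial Finset

lemma prod_map_X (σ : Type*) [DecidableEq σ] (R : Type*) [CommSemiring R] (s : Multiset σ) :
    (s.map (X : σ → MvPolynomial σ R)).prod = monomial s.toFinsupp 1 := by
  induction s using Multiset.induction with
  | empty => simp
  | cons a s ih =>
      have : a ::ₘ s = {a} + s := by simp [Multiset.singleton_add]
      rw [Multiset.map_cons, Multiset.prod_cons, ih, this, Multiset.toFinsupp_add,
        Multiset.toFinsupp_singleton, X, monomial_mul, one_mul]

lemma coeff_hsymm (σ : Type*) [Fintype σ] [DecidableEq σ] (R : Type*) [CommSemiring R]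
    (n : ℕ) (μ : σ →₀ ℕ) :
    coeff μ (hsymm σ R n) = if (∑ i, μ i) = n then 1 else 0 := by
  have hcard : ∀ ν : σ →₀ ℕ, (Multiset.card ν.toMultiset) = ∑ i, ν i := by
    intro ν
    rw [Finsupp.card_toMultiset, Finsupp.sum_fintype]
    · rfl
    · intro; rfl
  rw [hsymm]
  simp_rw [prod_map_X, coeff_sum, coeff_monomial]
  split_ifs with h
  · have hs0 : Multiset.card μ.toMultiset = n := by rw [hcard]; exact h
    rw [Fintype.sum_eq_single (Sym.mk μ.toMultiset hs0)]
    · simp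
    · intro s hs
      rw [if_neg]
      intro he
      apply hs
      apply Sym.coe_injective
      simp only [Sym.coe_mk]
      rw [← he, Multiset.toFinsupp_toMultiset]; rfl
  · apply Finset.sum_eq_zero
    intro s _
    rw [if_neg]
    intro he
    apply h
    rw [← he, ← hcard, Multiset.toFinsupp_toMultiset]
    exact s.2

lemma finSuccEquiv_hsymm (m d : ℕ) :
    (finSuccEquiv ℤ m) (hsymm (Fin (m+1)) ℤ d) =
      ∑ j ∈ range (d+1), Polynomial.C (hsymm (Fin m) ℤ (d - j)) * Polynomial.X ^ j := by
  ext k μ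
  rw [finSuccEquiv_coeff_coeff, coeff_hsymm]
  rw [Polynomial.finset_sum_coeff]
  simp_rw [Polynomial.coeff_C_mul, Polynomial.coeff_X_pow, mul_ite, mul_one, mul_zero]
  rw [MvPolynomial.coeff_sum]
  simp_rw [apply_ite (coeff μ), MvPolynomial.coeff_zero]
  rw [Finset.sum_ite_eq (range (d+1)) k (fun j => coeff μ (hsymm (Fin m) ℤ (d - j)))]
  have hsum : (∑ i, (μ.cons k) i) = k + ∑ i, μ i := by
    rw [Fin.sum_univ_succ]
    simp [Finsupp.cons_zero, Finsupp.cons_succ]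
  rw [hsum]
  by_cases hk : k ∈ range (d+1)
  · rw [if_pos hk, coeff_hsymm]
    rw [Finset.mem_range] at hk
    by_cases h2 : ∑ i, μ i = d - k
    · rw [if_pos h2, if_pos (by omega)]
    · rw [if_neg h2, if_neg (by omega)]
  · rw [if_neg hk]
    rw [Finset.mem_range] at hk
    rw [if_neg (by omega)]

lemma finSuccEquiv_hsymm_succ (m d : ℕ) :
    (finSuccEquiv ℤ m) (hsymm (Fin (m+1)) ℤ (d+1)) =
      Polynomial.X * (finSuccEquiv ℤ m) (hsymm (Fin (m+1)) ℤ d) +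
        Polynomial.C (hsymm (Fin m) ℤ (d+1)) := by
  rw [finSuccEquiv_hsymm, finSuccEquiv_hsymm, Finset.sum_range_succ' _ (d+1)]
  rw [Finset.mul_sum]
  refine congrArg₂ (· + ·) ?_ ?_
  · apply Finset.sum_congr rfl
    intro j _
    have : d + 1 - (j + 1) = d - j := by omega
    rw [this]
    ring
  · simp


def shiftT {b : ℕ} (t : ℕ) (s : Fin b → ℕ) : Fin b → ℕ :=
  fun i => if h : i.val + 1 < b then s ⟨i.val + 1, h⟩ else t

def compT {b : ℕ} (r : Fin b → ℕ) (t k : ℕ) : Finset (Fin b → ℕ) :=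
  (Finset.Nat.antidiagonalTuple b k).filter fun s => ∀ i, s i ≤ r i + shiftT t s i

lemma mem_compT {b : ℕ} {r : Fin b → ℕ} {t k : ℕ} {s : Fin b → ℕ} :
    s ∈ compT r t k ↔ (∑ i, s i) = k ∧ ∀ i, s i ≤ r i + shiftT t s i := by
  simp [compT, Finset.Nat.mem_antidiagonalTuple]

lemma shiftT_castSucc {b : ℕ} (t : ℕ) (s : Fin (b+1) → ℕ) (i : Fin b) :
    shiftT t s (Fin.castSucc i) = shiftT (s (Fin.last b)) (fun j => s (Fin.castSucc j)) i := by
  unfold shiftT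
  by_cases h : i.val + 1 < b
  · rw [dif_pos h, dif_pos (by simp only [Fin.coe_castSucc]; omega)]
    show _ = s (Fin.castSucc ⟨i.val + 1, h⟩)
    congr 1
  · rw [dif_neg h, dif_pos (by simp only [Fin.coe_castSucc]; omega)]
    congr 1
    apply Fin.ext
    simp only [Fin.coe_castSucc, Fin.val_mk, Fin.val_last]
    omega

lemma sum_truncate {M : Type*} [AddCommMonoid M] (f : ℕ → M) (a c : ℕ) :
    ∑ u ∈ range (a+1), (if u ≤ c then f u else 0) = ∑ u ∈ range (min a c + 1), f u := by
  rw [← Finset.sum_filter]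
  congr 1
  ext u
  simp only [Finset.mem_filter, Finset.mem_range]
  omega

noncomputable def Pp (m d : ℕ) : Polynomial (MvPolynomial (Fin m) ℤ) :=
  finSuccEquiv ℤ m (hsymm (Fin (m+1)) ℤ d)

lemma Pp_zero (m : ℕ) : Pp m 0 = 1 := by
  rw [Pp, hsymm_zero, map_one]


lemma Pp_succ (m d : ℕ) :
    Pp m (d+1) = Polynomial.X * Pp m d + Polynomial.C (hsymm (Fin m) ℤ (d+1)) := by
  rw [Pp, Pp, finSuccEquiv_hsymm_succ]



lemma shiftT_last {b : ℕ} (t : ℕ) (s : Fin (b+1) → ℕ) :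
    shiftT t s (Fin.last b) = t := by
  rw [shiftT, dif_neg (by simp)]

lemma main (m : ℕ) (b : ℕ) : ∀ (r : Fin b → ℕ) (t k : ℕ),
    Polynomial.coeff ((∏ i : Fin b, Pp m (i.val + 1) ^ r i) * Pp m b ^ t) k =
      ∑ s ∈ compT r t k,
        ((∏ i, Nat.choose (r i + shiftT t s i) (s i) : ℕ) : MvPolynomial (Fin m) ℤ) *
          ∏ i : Fin b, hsymm (Fin m) ℤ (i.val + 1) ^ (r i + shiftT t s i - s i) := by
  induction b with
  | zero =>
      intro r t k
      have hset : compT r t k = if k = 0 then ({fun _ => 0} : Finset (Fin 0 → ℕ)) else ∅ := by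
        ext s
        simp only [mem_compT]
        have hs : s = fun _ => 0 := funext fun i => i.elim0
        split_ifs with hk
        · subst hk
          simp [hs, Fin.forall_iff]
        · simp only [Finset.notMem_empty, iff_false, not_and]
          intro habs
          exact absurd (by simpa using habs.symm) hk
      rw [Pp_zero, one_pow, mul_one, Finset.univ_eq_empty, Finset.prod_empty,
        Polynomial.coeff_one, hset]
      split_ifs with hk
      · simp
      · simp
  | succ b ih =>
      intro r t k
      set r' : Fin b → ℕ := fun i => r (Fin.castSucc i) with hr'
      set R := r (Fin.last b) + t with hR
      have hsplit : (∏ i : Fin (b+1), Pp m (i.val+1) ^ r i) * Pp m (b+1) ^ t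
          = (∏ i : Fin b, Pp m (i.val+1) ^ r' i) * Pp m (b+1) ^ R := by
        rw [Fin.prod_univ_castSucc]
        simp only [Fin.coe_castSucc, Fin.val_last]
        rw [hR, pow_add, hr']
        ring
      set A := ∏ i : Fin b, Pp m (i.val+1) ^ r' i with hA
      have hterm : ∀ u, A *
          ((Polynomial.X * Pp m b)^u * (Polynomial.C (hsymm (Fin m) ℤ (b+1)))^(R-u) *
            ((R.choose u : ℕ) : Polynomial (MvPolynomial (Fin m) ℤ)))
          = Polynomial.C (((R.choose u : ℕ) : MvPolynomial (Fin m) ℤ) * hsymm (Fin m) ℤ (b+1) ^ (R-u)) *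
              (A * Pp m b ^ u) * Polynomial.X ^ u := by
        intro u
        rw [map_mul, map_pow, Polynomial.C_eq_natCast]
        ring
      rw [hsplit, Pp_succ, add_pow, Finset.mul_sum, Polynomial.finset_sum_coeff]
      have step1 : ∀ u ∈ range (R+1),
          Polynomial.coeff (A * ((Polynomial.X * Pp m b)^u *
            (Polynomial.C (hsymm (Fin m) ℤ (b+1)))^(R-u) * ((R.choose u : ℕ) : Polynomial (MvPolynomial (Fin m) ℤ)))) k
          = if u ≤ k then ((R.choose u : ℕ) : MvPolynomial (Fin m) ℤ) * hsymm (Fin m) ℤ (b+1) ^ (R-u) *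
              Polynomial.coeff (A * Pp m b ^ u) (k - u) else 0 := by
        intro u _
        rw [hterm u, Polynomial.coeff_mul_X_pow']
        split_ifs with h
        · rw [Polynomial.coeff_C_mul]
        · rfl
      rw [Finset.sum_congr rfl step1, sum_truncate, Finset.sum_congr rfl
        (fun u _ => by rw [ih r' u (k - u)])]
      -- Now the RHS side: reindex via snoc/init bijection
      have hbij : ∑ s ∈ compT r t k,
            ((∏ i, Nat.choose (r i + shiftT t s i) (s i) : ℕ) : MvPolynomial (Fin m) ℤ) *
              ∏ i : Fin (b+1), hsymm (Fin m) ℤ (i.val + 1) ^ (r i + shiftT t s i - s i)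
          = ∑ p ∈ (range (min R k + 1)).sigma (fun u => compT r' u (k - u)),
              ((∏ i, Nat.choose (r i + shiftT t (Fin.snoc p.2 p.1) i) ((Fin.snoc p.2 p.1 : Fin (b+1) → ℕ) i) : ℕ) : MvPolynomial (Fin m) ℤ) *
                ∏ i : Fin (b+1), hsymm (Fin m) ℤ (i.val + 1) ^ (r i + shiftT t (Fin.snoc p.2 p.1) i - (Fin.snoc p.2 p.1 : Fin (b+1) → ℕ) i) := by
        apply Finset.sum_nbij' (i := fun s => (⟨s (Fin.last b), fun j => s (Fin.castSucc j)⟩ : (_ : ℕ) × (Fin b → ℕ)))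
          (j := fun p => Fin.snoc p.2 p.1)
        · intro s hs
          rw [mem_compT] at hs
          obtain ⟨hsum, hcon⟩ := hs
          have hlast_le : s (Fin.last b) ≤ k := by
            rw [← hsum]
            exact Finset.single_le_sum (fun i _ => Nat.zero_le _) (Finset.mem_univ _)
          have hlastR : s (Fin.last b) ≤ R := by
            have := hcon (Fin.last b)
            rwa [shiftT_last] at this
          rw [Finset.mem_sigma]
          dsimp only
          constructor
          · rw [Finset.mem_range]; omega
          · rw [mem_compT]
            constructor
            · have := Fin.sum_univ_castSucc s
              omega
            · intro i
              have := hcon (Fin.castSucc i)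
              rwa [shiftT_castSucc] at this
        · intro p hp
          rw [Finset.mem_sigma, Finset.mem_range, mem_compT] at hp
          obtain ⟨hu, hsum, hcon⟩ := hp
          rw [mem_compT]
          constructor
          · rw [Fin.sum_univ_castSucc]
            simp only [Fin.snoc_castSucc, Fin.snoc_last]
            omega
          · intro i
            rcases Fin.eq_castSucc_or_eq_last i with ⟨j, rfl⟩ | rfl
            · rw [shiftT_castSucc]
              simp only [Fin.snoc_castSucc, Fin.snoc_last]
              exact hcon j
            · rw [shiftT_last, Fin.snoc_last]
              omega
        · intro s _
          exact Fin.snoc_init_self s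
        · intro p _
          refine Sigma.ext ?_ (heq_of_eq ?_)
          · simp [Fin.snoc_last]
          · funext j
            simp [Fin.snoc_castSucc]
        · intro s hs
          dsimp only
          have hss : Fin.snoc (fun j => s (Fin.castSucc j)) (s (Fin.last b)) = s :=
            Fin.snoc_init_self s
          rw [hss]
      rw [hbij, Finset.sum_sigma]
      apply Finset.sum_congr rfl
      intro u hu
      rw [Finset.mem_range] at hu
      rw [Finset.mul_sum]
      apply Finset.sum_congr rfl
      intro s' hs'
      dsimp only
      -- termwise identity
      have e1 : ∀ i : Fin b, shiftT t (Fin.snoc s' u) (Fin.castSucc i) = shiftT u s' i := by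
        intro i
        rw [shiftT_castSucc]
        simp only [Fin.snoc_castSucc, Fin.snoc_last]
      rw [Fin.prod_univ_castSucc]
      rw [Fin.prod_univ_castSucc]
      simp only [e1, Fin.snoc_castSucc, Fin.snoc_last, shiftT_last, Fin.coe_castSucc, Fin.val_last, ← hr']
      push_cast
      ring

end Stmt11Aux

theorem stmt11 (m : ℕ) {b : ℕ} (hb : 1 ≤ b) (r : Fin b → ℕ) (k : ℕ) :
    Polynomial.coeff
        ((MvPolynomial.finSuccEquiv ℤ m)
          (∏ i : Fin b, MvPolynomial.hsymm (Fin (m + 1)) ℤ (i.val + 1) ^ r i)) k =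
      ∑ s ∈ compBddL r k,
        ((∏ i, Nat.choose (r i + shiftL s i) (s i) : ℕ) : MvPolynomial (Fin m) ℤ) *
          ∏ i : Fin b, MvPolynomial.hsymm (Fin m) ℤ (i.val + 1) ^ (r i + shiftL s i - s i) := by
  have h := Stmt11Aux.main m b r 0 k
  rw [pow_zero, mul_one] at h
  rw [map_prod]
  simp only [map_pow]
  exact h
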